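/- In the biased majority model on the torus T_{n,n} with von Neumann neighborhood and random initial coloring with p_b = o(1/√(log n)), with probability 1 - o(1) there is no Moore-connected blue component of size ⌈log n⌉ in generation g_1. -/

import Mathlib

open Filter

/-- Number of blue cells among the four von Neumann neighbors of `v` in the torus. -/
def vnCount (n : ℕ) (g : ZMod n × ZMod n → Bool) (v : ZMod n × ZMod n) : ℕ :=
  (if g (v.1 + 1, v.2) = true then 1 else 0) + (if g (v.1 - 1, v.2) = true then 1 else 0) +
    (if g (v.1, v.2 + 1) = true then 1 else 0) + (if g (v.1, v.2 - 1) = true then 1 else 0)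

/-- One synchronous step of the majority model on the torus `T_{n,n}` with von Neumann
neighborhood: strict majority among the 4 neighbors, ties conserve the current color. -/
def torusMajStep (n : ℕ) (g : ZMod n × ZMod n → Bool) : ZMod n × ZMod n → Bool :=
  fun v => if 2 < vnCount n g v then true else if vnCount n g v < 2 then false else g v

/-- One synchronous step of the biased majority model on the torus `T_{n,n}` with
von Neumann neighborhood: a cell becomes blue iff at least 2 of its 4 neighbors are blue. -/
def torusBMajStep (n : ℕ) (g : ZMod n × ZMod n → Bool) : ZMod n × ZMod n → Bool :=
  fun v => decide (2 ≤ vnCount n g v)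

/-- Moore (8-)adjacency on the torus `T_{n,n}`. -/
def mooreAdj (n : ℕ) (u v : ZMod n × ZMod n) : Prop :=
  u ≠ v ∧ (u.1 = v.1 ∨ u.1 = v.1 + 1 ∨ v.1 = u.1 + 1) ∧
    (u.2 = v.2 ∨ u.2 = v.2 + 1 ∨ v.2 = u.2 + 1)

/-- The Moore (8-)adjacency graph on the torus `T_{n,n}`. -/
def mooreGraph (n : ℕ) : SimpleGraph (ZMod n × ZMod n) where
  Adj := mooreAdj n
  symm := ⟨by
    rintro u v ⟨h0, h1, h2⟩
    exact ⟨Ne.symm h0, by tauto, by tauto⟩⟩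
  loopless := ⟨fun v h => h.1 rfl⟩

open scoped Classical in
/-- Probability, under the product measure where each vertex is blue (`true`)
independently with probability `p`, of the event `E`. -/
noncomputable def pr {α : Type*} [Fintype α] [DecidableEq α] (p : ℝ)
    (E : (α → Bool) → Prop) : ℝ :=
  ∑ g : α → Bool, if E g then (∏ v, if g v = true then p else 1 - p) else 0

section prob
variable {α : Type*} [Fintype α] [DecidableEq α] {p : ℝ}

open scoped Classical

lemma weight_nonneg (h0 : 0 ≤ p) (h1 : p ≤ 1) (g : α → Bool) :
    0 ≤ ∏ v, if g v = true then p else 1 - p :=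
  Finset.prod_nonneg fun v _ => by split <;> linarith

lemma sum_weight (h0 : 0 ≤ p) (h1 : p ≤ 1) :
    ∑ g : α → Bool, (∏ v, if g v = true then p else 1 - p) = 1 := by
  rw [← Fintype.prod_sum (fun (v : α) (b : Bool) => if b = true then p else 1 - p)]
  simp

lemma pr_nonneg (h0 : 0 ≤ p) (h1 : p ≤ 1) (E : (α → Bool) → Prop) : 0 ≤ pr p E := by
  refine Finset.sum_nonneg fun g _ => ?_
  split
  · exact weight_nonneg h0 h1 g
  · exact le_refl _

lemma pr_mono (h0 : 0 ≤ p) (h1 : p ≤ 1) {E F : (α → Bool) → Prop}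
    (h : ∀ g, E g → F g) : pr p E ≤ pr p F := by
  refine Finset.sum_le_sum fun g _ => ?_
  by_cases hE : E g
  · simp [hE, h g hE]
  · simp only [hE, if_false]
    split
    · exact weight_nonneg h0 h1 g
    · exact le_refl _

lemma pr_compl (h0 : 0 ≤ p) (h1 : p ≤ 1) (E : (α → Bool) → Prop) :
    pr p (fun g => ¬ E g) = 1 - pr p E := by
  have hs := sum_weight (α := α) h0 h1
  have key : pr p E + pr p (fun g => ¬ E g) =
      ∑ g : α → Bool, (∏ v, if g v = true then p else 1 - p) := by
    rw [pr, pr, ← Finset.sum_add_distrib]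
    refine Finset.sum_congr rfl fun g _ => ?_
    by_cases hE : E g <;> simp [hE]
  rw [hs] at key
  linarith

lemma pr_union_le (h0 : 0 ≤ p) (h1 : p ≤ 1) {ι : Type*} [DecidableEq ι] (T : Finset ι)
    (Q : ι → (α → Bool) → Prop) :
    pr p (fun g => ∃ i ∈ T, Q i g) ≤ ∑ i ∈ T, pr p (Q i) := by
  have hw : ∀ g : α → Bool, 0 ≤ ∏ v, if g v = true then p else 1 - p := weight_nonneg h0 h1
  simp only [pr]
  rw [Finset.sum_comm]
  refine Finset.sum_le_sum fun g _ => ?_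
  by_cases h : ∃ i ∈ T, Q i g
  · obtain ⟨i, hi, hQ⟩ := h
    rw [if_pos ⟨i, hi, hQ⟩]
    calc (∏ v, if g v = true then p else 1 - p)
        = (if Q i g then (∏ v, if g v = true then p else 1 - p) else 0) := (if_pos hQ).symm
      _ ≤ ∑ i ∈ T, (if Q i g then (∏ v, if g v = true then p else 1 - p) else 0) :=
          Finset.single_le_sum (f := fun j => if Q j g then (∏ v, if g v = true then p else 1 - p) else 0)
            (fun j _ => by split; exacts [hw g, le_refl 0]) hi
  · rw [if_neg h]
    exact Finset.sum_nonneg fun j _ => by split; exacts [hw g, le_refl 0]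

lemma pr_allblue_le (h0 : 0 ≤ p) (h1 : p ≤ 1) (B : Finset α) :
    pr p (fun g => ∀ v ∈ B, g v = true) ≤ p ^ B.card := by
  set f : α → Bool → ℝ := fun v b =>
    if v ∈ B then (if b = true then p else 0) else (if b = true then p else 1 - p) with hf
  have key : ∑ g : α → Bool, ∏ v, f v (g v) = p ^ B.card := by
    rw [← Fintype.prod_sum f]
    have : ∀ v : α, (∑ b : Bool, f v b) = if v ∈ B then p else 1 := by
      intro v
      by_cases hv : v ∈ B <;> simp [hf, hv] <;> ring
    rw [Finset.prod_congr rfl fun v _ => this v, Finset.prod_ite_mem, Finset.univ_inter,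
      Finset.prod_const]
  rw [← key]
  refine Finset.sum_le_sum fun g _ => ?_
  by_cases hg : ∀ v ∈ B, g v = true
  · rw [if_pos hg]
    refine le_of_eq (Finset.prod_congr rfl fun v _ => ?_)
    by_cases hv : v ∈ B
    · simp [hf, hv, hg v hv]
    · simp [hf, hv]
  · rw [if_neg hg]
    refine Finset.prod_nonneg fun v _ => ?_
    by_cases hv : v ∈ B <;> by_cases hb : g v = true <;> simp [hf, hv, hb] <;> linarith

end prob


set_option linter.unusedSectionVars false

section comb
variable {α : Type*} [AddCommGroup α] [DecidableEq α]

/-- `RL D B k x y`: a chain of `k` steps from `x` to `y`; all points except possibly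
the final one lie in `B`, and each increment lies in `D`. -/
def RL (D B : Finset α) : ℕ → α → α → Prop
  | 0, x, y => x = y
  | k+1, x, y => ∃ z ∈ B, y - z ∈ D ∧ RL D B k x z

lemma RL.zero {D B : Finset α} {x y : α} (h : RL D B 0 x y) : x = y := h

lemma RL_cons_front {D B : Finset α} {k : ℕ} {x y x' : α}
    (hx' : x' ∈ B) (hx : x ∈ B) (hd : x - x' ∈ D) (h : RL D B k x y) :
    RL D B (k+1) x' y := by
  induction k generalizing y with
  | zero => exact ⟨x', hx', by rw [← h.zero]; exact hd, rfl⟩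
  | succ k ih =>
    obtain ⟨z, hz, hzd, hz'⟩ := h
    exact ⟨z, hz, hzd, ih hz'⟩

lemma RL_mono {D B B' : Finset α} (hBB : B ⊆ B') {k : ℕ} {x y : α}
    (h : RL D B k x y) : RL D B' k x y := by
  induction k generalizing y with
  | zero => exact h
  | succ k ih => obtain ⟨z, hz, hzd, hz'⟩ := h; exact ⟨z, hBB hz, hzd, ih hz'⟩

/-- `Conn D B b₀`: every element of `B` is reachable from `b₀` within `B`. -/
def Conn (D B : Finset α) (b₀ : α) : Prop := ∀ x ∈ B, ∃ k, RL D B k b₀ x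

/-- Remove a farthest vertex: connectivity is kept, and the removed vertex has a
neighbor in the rest. -/
lemma exists_removable (D B : Finset α) (b₀ : α) (hb : b₀ ∈ B) (hconn : Conn D B b₀)
    (hcard : 2 ≤ B.card) :
    ∃ u ∈ B, u ≠ b₀ ∧ Conn D (B.erase u) b₀ ∧ ∃ w ∈ B.erase u, u - w ∈ D := by
  classical
  have hne : B.Nonempty := Finset.card_pos.mp (by omega)
  set d : α → ℕ := fun x => if h : ∃ k, RL D B k b₀ x then Nat.find h else 0 with hd
  obtain ⟨u, hu, hmax⟩ := B.exists_max_image d hne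
  have hdspec : ∀ x ∈ B, RL D B (d x) b₀ x := by
    intro x hx
    have h := hconn x hx
    simp only [hd, dif_pos h]
    exact Nat.find_spec h
  have hdmin : ∀ x ∈ B, ∀ j, RL D B j b₀ x → d x ≤ j := by
    intro x hx j hj
    have h := hconn x hx
    simp only [hd, dif_pos h]
    exact Nat.find_min' h hj
  have hd0 : ∀ x ∈ B, d x = 0 → b₀ = x := by
    intro x hx h0
    have := hdspec x hx
    rw [h0] at this
    exact this
  have hdb0 : d b₀ = 0 := Nat.le_zero.mp (hdmin b₀ hb 0 rfl)
  have hdu : 1 ≤ d u := by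
    obtain ⟨x, hx, hxne⟩ := Finset.exists_mem_ne hcard b₀
    have h1 : 1 ≤ d x := by
      rcases Nat.eq_zero_or_pos (d x) with h0 | h1
      · exact absurd (hd0 x hx h0).symm hxne
      · exact h1
    exact le_trans h1 (hmax x hx)
  have hub : u ≠ b₀ := fun h => by rw [h, hdb0] at hdu; omega
  refine ⟨u, hu, hub, ?_, ?_⟩
  · have aux : ∀ k, ∀ x ∈ B, x ≠ u → d x ≤ k → ∃ j, RL D (B.erase u) j b₀ x := by
      intro k
      induction k with
      | zero =>
        intro x hxB _ hdx
        exact ⟨0, hd0 x hxB (Nat.le_zero.mp hdx)⟩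
      | succ k ih =>
        intro x hxB hxu hdx
        rcases Nat.eq_zero_or_pos (d x) with h0 | hpos
        · exact ⟨0, hd0 x hxB h0⟩
        · have hchain := hdspec x hxB
          obtain ⟨j, hj⟩ : ∃ j, d x = j + 1 := ⟨d x - 1, by omega⟩
          rw [hj] at hchain
          obtain ⟨z, hzB, hzd, hz⟩ := hchain
          have hdz : d z ≤ j := hdmin z hzB j hz
          have hzu : z ≠ u := by
            intro h
            rw [h] at hdz
            have := hmax x hxB
            omega
          obtain ⟨j', hj'⟩ := ih z hzB hzu (by omega)
          exact ⟨j' + 1, z, Finset.mem_erase.mpr ⟨hzu, hzB⟩, hzd, hj'⟩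
    intro x hx
    obtain ⟨hxu, hxB⟩ := Finset.mem_erase.mp hx
    exact aux (d x) x hxB hxu le_rfl
  · have hchain := hdspec u hu
    obtain ⟨j, hj⟩ : ∃ j, d u = j + 1 := ⟨d u - 1, by omega⟩
    rw [hj] at hchain
    obtain ⟨z, hzB, hzd, hz⟩ := hchain
    have hdz : d z ≤ j := hdmin z hzB j hz
    have hzu : z ≠ u := fun h => by rw [h] at hdz; omega
    exact ⟨z, Finset.mem_erase.mpr ⟨hzu, hzB⟩, hzd⟩

/-- Trimming a rooted connected set to any smaller size. -/
lemma exists_trim (D : Finset α) (m : ℕ) :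
    ∀ B : Finset α, ∀ b₀, b₀ ∈ B → Conn D B b₀ → m ≤ B.card → 1 ≤ m →
    ∃ B' ⊆ B, b₀ ∈ B' ∧ B'.card = m ∧ Conn D B' b₀ := by
  intro B
  induction B using Finset.strongInduction with
  | _ B ih =>
    intro b₀ hb hconn hcard hm
    rcases eq_or_lt_of_le hcard with heq | hlt
    · exact ⟨B, Finset.Subset.refl B, hb, heq.symm, hconn⟩
    · obtain ⟨u, hu, hub, hconn', -⟩ := exists_removable D B b₀ hb hconn (by omega)
      have hss : B.erase u ⊂ B := Finset.erase_ssubset hu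
      have hbe : b₀ ∈ B.erase u := Finset.mem_erase.mpr ⟨Ne.symm hub, hb⟩
      have hce : m ≤ (B.erase u).card := by
        rw [Finset.card_erase_of_mem hu]; omega
      obtain ⟨B', hB'sub, hB'b, hB'card, hB'conn⟩ := ih (B.erase u) hss b₀ hbe hconn' hce hm
      exact ⟨B', hB'sub.trans (Finset.erase_subset u B), hB'b, hB'card, hB'conn⟩

/-- The set of points visited by a walk with step list `l` starting at `b`. -/
def positions (b : α) : List α → Finset α
  | [] => {b}
  | d :: l => insert b (positions (b + d) l)

lemma self_mem_positions (b : α) (l : List α) : b ∈ positions b l := by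
  cases l <;> simp [positions]

lemma positions_append (b : α) (l₁ l₂ : List α) :
    positions b (l₁ ++ l₂) = positions b l₁ ∪ positions (b + l₁.sum) l₂ := by
  induction l₁ generalizing b with
  | nil =>
    simp only [List.nil_append, positions, List.sum_nil, add_zero, ← Finset.insert_eq]
    exact (Finset.insert_eq_self.mpr (self_mem_positions b l₂)).symm
  | cons d l ih =>
    simp only [List.cons_append, List.append_eq, positions, List.sum_cons, ih (b + d),
      ← add_assoc, Finset.insert_union]

lemma mem_positions_split {w b : α} {l : List α} (h : w ∈ positions b l) :
    ∃ l₁ l₂, l = l₁ ++ l₂ ∧ b + l₁.sum = w := by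
  induction l generalizing b with
  | nil =>
    simp [positions] at h
    exact ⟨[], [], rfl, by simp [h.symm]⟩
  | cons d l ih =>
    rw [positions, Finset.mem_insert] at h
    rcases h with h | h
    · exact ⟨[], d :: l, rfl, by simp [h.symm]⟩
    · obtain ⟨l₁, l₂, hl, hsum⟩ := ih h
      exact ⟨d :: l₁, l₂, by rw [hl, List.cons_append], by simpa [add_assoc] using hsum⟩

/-- Spanning-walk lemma: a rooted connected set of size `m` is the position set of a
walk of length `2*(m-1)` with steps in `D`. -/
lemma exists_spanning_list (D : Finset α) (hD : ∀ d ∈ D, -d ∈ D) :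
    ∀ B : Finset α, ∀ b₀, b₀ ∈ B → Conn D B b₀ →
    ∃ l : List α, (∀ d ∈ l, d ∈ D) ∧ l.length = 2 * (B.card - 1) ∧ positions b₀ l = B := by
  intro B
  induction B using Finset.strongInduction with
  | _ B ih =>
    intro b₀ hb hconn
    rcases le_or_gt B.card 1 with hc | hc
    · have hB : B = {b₀} := by
        apply Finset.eq_singleton_iff_unique_mem.mpr
        refine ⟨hb, fun x hx => ?_⟩
        by_contra hne
        have : 2 ≤ B.card := Finset.one_lt_card.mpr ⟨x, hx, b₀, hb, hne⟩
        omega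
      exact ⟨[], by simp, by simp [hB], by simp [positions, hB]⟩
    · obtain ⟨u, hu, hub, hconn', w, hw, hwd⟩ := exists_removable D B b₀ hb hconn hc
      have hss : B.erase u ⊂ B := Finset.erase_ssubset hu
      have hbe : b₀ ∈ B.erase u := Finset.mem_erase.mpr ⟨Ne.symm hub, hb⟩
      obtain ⟨l', hl'D, hl'len, hl'pos⟩ := ih (B.erase u) hss b₀ hbe hconn'
      have hwpos : w ∈ positions b₀ l' := by rw [hl'pos]; exact hw
      obtain ⟨l₁, l₂, hl', hsum⟩ := mem_positions_split hwpos
      refine ⟨l₁ ++ (u - w) :: (w - u) :: l₂, ?_, ?_, ?_⟩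
      · intro x hx
        rcases List.mem_append.mp hx with hx | hx
        · exact hl'D x (by rw [hl']; exact List.mem_append.mpr (Or.inl hx))
        · rcases List.mem_cons.mp hx with rfl | hx
          · exact hwd
          · rcases List.mem_cons.mp hx with rfl | hx
            · simpa using hD _ hwd
            · exact hl'D x (by rw [hl']; exact List.mem_append.mpr (Or.inr hx))
      · have h1 : l'.length = l₁.length + l₂.length := by rw [hl', List.length_append]
        have h2 : (B.erase u).card = B.card - 1 := Finset.card_erase_of_mem hu
        simp only [List.length_append, List.length_cons]
        omega
      · have e1 : w + (u - w) = u := by abel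
        have e2 : u + (w - u) = w := by abel
        rw [positions_append, hsum]
        simp only [positions, e1, e2]
        have h3 : w ∈ insert u (positions w l₂) :=
          Finset.mem_insert_of_mem (self_mem_positions w l₂)
        rw [Finset.insert_eq_self.mpr h3, Finset.union_insert]
        have h4 : positions b₀ l₁ ∪ positions w l₂ = B.erase u := by
          rw [← hl'pos, hl', positions_append, hsum]
        rw [h4, Finset.insert_erase hu]

open scoped Classical in
/-- Counting connected rooted sets of given size. -/
lemma card_conn_sets_le [Fintype α] (D : Finset α) (hD : ∀ d ∈ D, -d ∈ D) (b₀ : α) (m : ℕ) :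
    ((Finset.univ : Finset (Finset α)).filter
        (fun B : Finset α => b₀ ∈ B ∧ B.card = m ∧ Conn D B b₀)).card ≤ D.card ^ (2 * (m - 1)) := by
  classical
  set L := 2 * (m - 1)
  have hsub : (Finset.univ : Finset (Finset α)).filter (fun B : Finset α => b₀ ∈ B ∧ B.card = m ∧ Conn D B b₀)
      ⊆ (Fintype.piFinset (fun _ : Fin L => D)).image
        (fun f => positions b₀ (List.ofFn f)) := by
    intro B hB
    obtain ⟨-, hbB, hcard, hconn⟩ := Finset.mem_filter.mp hB
    obtain ⟨l, hlD, hllen, hlpos⟩ := exists_spanning_list D hD B b₀ hbB hconn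
    have hlen : l.length = L := by rw [hllen, hcard]
    refine Finset.mem_image.mpr ⟨fun i => l.get (Fin.cast hlen.symm i), ?_, ?_⟩
    · exact Fintype.mem_piFinset.mpr fun i => hlD _ (l.get_mem _)
    · have : List.ofFn (fun i => l.get (Fin.cast hlen.symm i)) = l := by
        apply List.ext_get
        · simp [hlen]
        · intro n h1 h2
          simp [List.get_ofFn]
      rw [this, hlpos]
  calc _ ≤ ((Fintype.piFinset (fun _ : Fin L => D)).image
        (fun f => positions b₀ (List.ofFn f))).card := Finset.card_le_card hsub
    _ ≤ (Fintype.piFinset (fun _ : Fin L => D)).card := Finset.card_image_le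
    _ = D.card ^ L := by simp
end comb


section torus
variable {nn : ℕ}

/-- All torus vectors with both coordinates represented by integers in `[-t, t]`. -/
noncomputable def Dball (nn t : ℕ) : Finset (ZMod nn × ZMod nn) :=
  ((Finset.Icc (-(t:ℤ)) t) ×ˢ (Finset.Icc (-(t:ℤ)) t)).image
    (fun p => ((p.1 : ZMod nn), (p.2 : ZMod nn)))

/-- `x` has integer coordinates of absolute value at most `t`. -/
def small (nn t : ℕ) (x : ZMod nn × ZMod nn) : Prop :=
  ∃ a b : ℤ, -(t:ℤ) ≤ a ∧ a ≤ t ∧ -(t:ℤ) ≤ b ∧ b ≤ t ∧ x = ((a : ZMod nn), (b : ZMod nn))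

lemma small_mem_Dball {t : ℕ} {x : ZMod nn × ZMod nn} (h : small nn t x) : x ∈ Dball nn t := by
  obtain ⟨a, b, h1, h2, h3, h4, rfl⟩ := h
  exact Finset.mem_image.mpr ⟨(a, b), Finset.mem_product.mpr
    ⟨Finset.mem_Icc.mpr ⟨h1, h2⟩, Finset.mem_Icc.mpr ⟨h3, h4⟩⟩, rfl⟩

lemma mem_Dball_small {t : ℕ} {x : ZMod nn × ZMod nn} (h : x ∈ Dball nn t) : small nn t x := by
  obtain ⟨⟨a, b⟩, hab, rfl⟩ := Finset.mem_image.mp h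
  obtain ⟨ha, hb⟩ := Finset.mem_product.mp hab
  obtain ⟨ha1, ha2⟩ := Finset.mem_Icc.mp ha
  obtain ⟨hb1, hb2⟩ := Finset.mem_Icc.mp hb
  exact ⟨a, b, ha1, ha2, hb1, hb2, rfl⟩

lemma Dball_symm (t : ℕ) : ∀ d ∈ Dball nn t, -d ∈ Dball nn t := by
  intro d hd
  obtain ⟨a, b, h1, h2, h3, h4, rfl⟩ := mem_Dball_small hd
  refine small_mem_Dball ⟨-a, -b, by omega, by omega, by omega, by omega, ?_⟩
  simp [Prod.neg_mk]

lemma Dball_card (t : ℕ) : (Dball nn t).card ≤ (2 * t + 1) ^ 2 := by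
  calc (Dball nn t).card ≤ ((Finset.Icc (-(t:ℤ)) t) ×ˢ (Finset.Icc (-(t:ℤ)) t)).card :=
        Finset.card_image_le
    _ = (2 * t + 1) * (2 * t + 1) := by
        have h : ((t:ℤ) + 1 - (-(t:ℤ))).toNat = 2 * t + 1 := by omega
        rw [Finset.card_product, Int.card_Icc, h]
    _ = (2 * t + 1) ^ 2 := by ring

lemma small_mono {t t' : ℕ} (htt : t ≤ t') {x : ZMod nn × ZMod nn} (h : small nn t x) :
    small nn t' x := by
  obtain ⟨a, b, h1, h2, h3, h4, rfl⟩ := h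
  exact ⟨a, b, by omega, by omega, by omega, by omega, rfl⟩

lemma small_add' {t t' : ℕ} {x y : ZMod nn × ZMod nn} (hx : small nn t x) (hy : small nn t' y) :
    small nn (t + t') (x + y) := by
  obtain ⟨a, b, h1, h2, h3, h4, rfl⟩ := hx
  obtain ⟨a', b', h1', h2', h3', h4', rfl⟩ := hy
  refine ⟨a + a', b + b', by omega, by omega, by omega, by omega, ?_⟩
  simp [Prod.mk_add_mk]

lemma small_neg' {t : ℕ} {x : ZMod nn × ZMod nn} (hx : small nn t x) : small nn t (-x) := by
  obtain ⟨a, b, h1, h2, h3, h4, rfl⟩ := hx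
  exact ⟨-a, -b, by omega, by omega, by omega, by omega, by simp [Prod.neg_mk]⟩

lemma small_sub' {t t' : ℕ} {x y : ZMod nn × ZMod nn} (hx : small nn t x) (hy : small nn t' y) :
    small nn (t + t') (x - y) := by
  rw [sub_eq_add_neg]
  exact small_add' hx (small_neg' hy)

/-- The four von Neumann neighbors of `v`. -/
def vnFinset (v : ZMod nn × ZMod nn) : Finset (ZMod nn × ZMod nn) :=
  {(v.1 + 1, v.2), (v.1 - 1, v.2), (v.1, v.2 + 1), (v.1, v.2 - 1)}

lemma vnFinset_card_le (v : ZMod nn × ZMod nn) : (vnFinset v).card ≤ 4 := by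
  refine le_trans (Finset.card_insert_le _ _) ?_
  refine Nat.succ_le_succ (le_trans (Finset.card_insert_le _ _) ?_)
  refine Nat.succ_le_succ (le_trans (Finset.card_insert_le _ _) ?_)
  simp

lemma small_one_of_mem_vn {v b : ZMod nn × ZMod nn} (h : b ∈ vnFinset v) : small nn 1 (b - v) := by
  simp only [vnFinset, Finset.mem_insert, Finset.mem_singleton] at h
  rcases h with rfl | rfl | rfl | rfl
  · exact ⟨1, 0, by omega, by omega, by omega, by omega, by
      simp [Prod.ext_iff, add_sub_cancel_left]⟩
  · exact ⟨-1, 0, by omega, by omega, by omega, by omega, by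
      simp [Prod.ext_iff, sub_sub_cancel_left]⟩
  · exact ⟨0, 1, by omega, by omega, by omega, by omega, by
      simp [Prod.ext_iff, add_sub_cancel_left]⟩
  · exact ⟨0, -1, by omega, by omega, by omega, by omega, by
      simp [Prod.ext_iff, sub_sub_cancel_left]⟩

lemma mem_vn_symm {v b : ZMod nn × ZMod nn} (h : b ∈ vnFinset v) : v ∈ vnFinset b := by
  simp only [vnFinset, Finset.mem_insert, Finset.mem_singleton] at h ⊢
  rcases h with rfl | rfl | rfl | rfl
  · right; left; simp
  · left; simp
  · right; right; right; simp
  · right; right; left; simp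

lemma small_one_of_moore {u v : ZMod nn × ZMod nn} (h : mooreAdj nn u v) : small nn 1 (u - v) := by
  obtain ⟨-, h1, h2⟩ := h
  have c1 : ∃ a : ℤ, -1 ≤ a ∧ a ≤ 1 ∧ u.1 - v.1 = (a : ZMod nn) := by
    rcases h1 with h | h | h
    · exact ⟨0, by omega, by omega, by rw [h]; simp⟩
    · exact ⟨1, by omega, by omega, by rw [h]; simp⟩
    · exact ⟨-1, by omega, by omega, by rw [h]; simp [sub_eq_iff_eq_add]⟩
  have c2 : ∃ b : ℤ, -1 ≤ b ∧ b ≤ 1 ∧ u.2 - v.2 = (b : ZMod nn) := by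
    rcases h2 with h | h | h
    · exact ⟨0, by omega, by omega, by rw [h]; simp⟩
    · exact ⟨1, by omega, by omega, by rw [h]; simp⟩
    · exact ⟨-1, by omega, by omega, by rw [h]; simp [sub_eq_iff_eq_add]⟩
  obtain ⟨a, ha1, ha2, ha⟩ := c1
  obtain ⟨b, hb1, hb2, hb⟩ := c2
  exact ⟨a, b, by exact_mod_cast ha1, by exact_mod_cast ha2, by exact_mod_cast hb1,
    by exact_mod_cast hb2, by rw [Prod.ext_iff]; exact ⟨ha, hb⟩⟩


lemma one_ne_zero_zmod (hnn : 3 ≤ nn) : (1 : ZMod nn) ≠ 0 := by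
  haveI : NeZero nn := ⟨by omega⟩
  intro h
  have h1 : ((1:ℕ) : ZMod nn).val = 1 := ZMod.val_cast_of_lt (by omega)
  rw [Nat.cast_one, h, ZMod.val_zero] at h1
  omega

lemma two_ne_zero_zmod (hnn : 3 ≤ nn) : (2 : ZMod nn) ≠ 0 := by
  haveI : NeZero nn := ⟨by omega⟩
  intro h
  have h1 : ((2:ℕ) : ZMod nn).val = 2 := ZMod.val_cast_of_lt (by omega)
  rw [Nat.cast_ofNat, h, ZMod.val_zero] at h1
  omega

lemma vnCount_eq_card (hnn : 3 ≤ nn) (g : ZMod nn × ZMod nn → Bool) (v : ZMod nn × ZMod nn) :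
    vnCount nn g v = ((vnFinset v).filter (fun b => g b = true)).card := by
  have h1 := one_ne_zero_zmod hnn
  have h2 := two_ne_zero_zmod hnn
  have e12 : (v.1 + 1, v.2) ≠ (v.1 - 1, v.2) := by
    intro h
    rw [Prod.mk.injEq] at h
    exact h2 (by linear_combination h.1)
  have e13 : (v.1 + 1, v.2) ≠ (v.1, v.2 + 1) := by
    intro h
    rw [Prod.mk.injEq] at h
    exact h1 (by linear_combination h.1)
  have e14 : (v.1 + 1, v.2) ≠ (v.1, v.2 - 1) := by
    intro h
    rw [Prod.mk.injEq] at h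
    exact h1 (by linear_combination h.1)
  have e23 : (v.1 - 1, v.2) ≠ (v.1, v.2 + 1) := by
    intro h
    rw [Prod.mk.injEq] at h
    exact h1 (by linear_combination -h.1)
  have e24 : (v.1 - 1, v.2) ≠ (v.1, v.2 - 1) := by
    intro h
    rw [Prod.mk.injEq] at h
    exact h1 (by linear_combination -h.1)
  have e34 : (v.1, v.2 + 1) ≠ (v.1, v.2 - 1) := by
    intro h
    rw [Prod.mk.injEq] at h
    exact h2 (by linear_combination h.2)
  rw [vnFinset, Finset.card_filter]
  rw [Finset.sum_insert (by simp [e12, e13, e14]),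
    Finset.sum_insert (by simp [e23, e24]),
    Finset.sum_insert (by simp [e34]),
    Finset.sum_singleton]
  simp only [vnCount]
  ring

lemma exists_blue_vn (hnn : 3 ≤ nn) {g : ZMod nn × ZMod nn → Bool} {v : ZMod nn × ZMod nn}
    (h : 2 ≤ vnCount nn g v) : ∃ b ∈ vnFinset v, g b = true := by
  by_contra hc
  push_neg at hc
  have := hc (v.1 + 1, v.2) (by simp [vnFinset])
  have := hc (v.1 - 1, v.2) (by simp [vnFinset])
  have := hc (v.1, v.2 + 1) (by simp [vnFinset])
  have := hc (v.1, v.2 - 1) (by simp [vnFinset])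
  simp [vnCount, *] at h

end torus


section det
variable {nn : ℕ}

lemma braw_card (hnn : 3 ≤ nn) (g : ZMod nn × ZMod nn → Bool) (S : Finset (ZMod nn × ZMod nn))
    (hblue : ∀ v ∈ S, 2 ≤ vnCount nn g v) :
    S.card ≤ 2 * ((S.biUnion vnFinset).filter (fun b => g b = true)).card := by
  classical
  set Braw := (S.biUnion vnFinset).filter (fun b => g b = true) with hBraw
  have key : ∀ v ∈ S, (vnFinset v).filter (fun b => g b = true) = Braw ∩ vnFinset v := by
    intro v hv
    ext x
    simp only [Finset.mem_filter, Finset.mem_inter, hBraw, Finset.mem_biUnion]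
    constructor
    · rintro ⟨hx, hg⟩
      exact ⟨⟨⟨v, hv, hx⟩, hg⟩, hx⟩
    · rintro ⟨⟨-, hg⟩, hx⟩
      exact ⟨hx, hg⟩
  have h1 : 2 * S.card ≤ ∑ v ∈ S, (Braw ∩ vnFinset v).card := by
    have hb : ∀ v ∈ S, 2 ≤ (Braw ∩ vnFinset v).card := by
      intro v hv
      rw [← key v hv, ← vnCount_eq_card hnn g v]
      exact hblue v hv
    calc 2 * S.card = ∑ _v ∈ S, 2 := by rw [Finset.sum_const, smul_eq_mul, mul_comm]
      _ ≤ _ := Finset.sum_le_sum hb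
  have h2 : ∑ v ∈ S, (Braw ∩ vnFinset v).card
      = ∑ b ∈ Braw, (S.filter (fun v => b ∈ vnFinset v)).card := by
    have e1 : ∀ v, (Braw ∩ vnFinset v).card = ∑ b ∈ Braw, if b ∈ vnFinset v then 1 else 0 := by
      intro v
      rw [← Finset.filter_mem_eq_inter, Finset.card_filter]
    have e2 : ∀ b, (S.filter (fun v => b ∈ vnFinset v)).card
        = ∑ v ∈ S, if b ∈ vnFinset v then 1 else 0 := by
      intro b
      rw [Finset.card_filter]
    simp only [e1, e2]
    exact Finset.sum_comm
  have h3 : ∑ b ∈ Braw, (S.filter (fun v => b ∈ vnFinset v)).card ≤ 4 * Braw.card := by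
    calc ∑ b ∈ Braw, (S.filter (fun v => b ∈ vnFinset v)).card
        ≤ ∑ _b ∈ Braw, 4 := by
          refine Finset.sum_le_sum fun b _ => ?_
          refine le_trans (Finset.card_le_card ?_) (vnFinset_card_le b)
          intro v hv
          exact mem_vn_symm (Finset.mem_filter.mp hv).2
      _ = 4 * Braw.card := by rw [Finset.sum_const, smul_eq_mul, mul_comm]
  omega

lemma det_core (hnn : 3 ≤ nn) (g : ZMod nn × ZMod nn → Bool) (S : Finset (ZMod nn × ZMod nn))
    (hSne : S.Nonempty)
    (hblue : ∀ v ∈ S, 2 ≤ vnCount nn g v)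
    (hconn : ((mooreGraph nn).induce (S : Set (ZMod nn × ZMod nn))).Connected) :
    ∃ B : Finset (ZMod nn × ZMod nn), (∀ b ∈ B, g b = true) ∧ S.card ≤ 2 * B.card ∧
      ∃ b₀ ∈ B, Conn (Dball nn 3) B b₀ := by
  classical
  set Braw := (S.biUnion vnFinset).filter (fun b => g b = true) with hBraw
  have hblueB : ∀ b ∈ Braw, g b = true := fun b hb => (Finset.mem_filter.mp hb).2
  have hmemB : ∀ z ∈ S, ∀ b ∈ vnFinset z, g b = true → b ∈ Braw := by
    intro z hz b hb hg
    exact Finset.mem_filter.mpr ⟨Finset.mem_biUnion.mpr ⟨z, hz, hb⟩, hg⟩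
  -- reachability inside S with Moore steps
  have hreach : ∀ u ∈ S, ∀ v ∈ S, ∃ k, RL (Dball nn 1) S k u v := by
    have aux : ∀ (a b : (S : Set (ZMod nn × ZMod nn))),
        ((mooreGraph nn).induce (S : Set (ZMod nn × ZMod nn))).Walk a b →
        ∃ k, RL (Dball nn 1) S k ↑a ↑b := by
      intro a b w
      induction w with
      | nil => exact ⟨0, rfl⟩
      | @cons a c b h p ih =>
        obtain ⟨k, hk⟩ := ih
        have hadj : mooreAdj nn ↑a ↑c := by simpa [mooreGraph] using h
        have hd : (↑c - ↑a : ZMod nn × ZMod nn) ∈ Dball nn 1 := by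
          have := small_one_of_moore ((mooreGraph nn).adj_symm hadj)
          exact small_mem_Dball this
        exact ⟨k + 1, RL_cons_front (Finset.mem_coe.mp a.2) (Finset.mem_coe.mp c.2) hd hk⟩
    intro u hu v hv
    obtain ⟨w⟩ := hconn.preconnected ⟨u, hu⟩ ⟨v, hv⟩
    exact aux _ _ w
  -- pick root
  obtain ⟨v₀, hv₀⟩ := hSne
  obtain ⟨b₀, hb₀vn, hb₀g⟩ := exists_blue_vn hnn (hblue v₀ hv₀)
  have hb₀B : b₀ ∈ Braw := hmemB v₀ hv₀ b₀ hb₀vn hb₀g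
  refine ⟨Braw, hblueB, braw_card hnn g S hblue, b₀, hb₀B, ?_⟩
  -- connectivity of Braw
  have aux2 : ∀ k, ∀ v₁ ∈ S, RL (Dball nn 1) S k v₀ v₁ →
      ∀ x ∈ Braw, x ∈ vnFinset v₁ → ∃ j, RL (Dball nn 3) Braw j b₀ x := by
    intro k
    induction k with
    | zero =>
      intro v₁ hv₁ hRL x hxB hxvn
      have hv : v₀ = v₁ := hRL
      subst hv
      refine ⟨1, b₀, hb₀B, ?_, rfl⟩
      have h1 : small nn 2 (x - b₀) := by
        have := small_sub' (small_one_of_mem_vn hxvn) (small_one_of_mem_vn hb₀vn)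
        rwa [sub_sub_sub_cancel_right] at this
      exact small_mem_Dball (small_mono (by norm_num) h1)
    | succ k ih =>
      intro v₁ hv₁ hRL x hxB hxvn
      obtain ⟨z, hzS, hzd, hz⟩ := hRL
      obtain ⟨bz, hbzvn, hbzg⟩ := exists_blue_vn hnn (hblue z hzS)
      have hbzB : bz ∈ Braw := hmemB z hzS bz hbzvn hbzg
      obtain ⟨j, hj⟩ := ih z hzS hz bz hbzB hbzvn
      refine ⟨j + 1, bz, hbzB, ?_, hj⟩
      have e : x - bz = (x - v₁) + ((v₁ - z) + -(bz - z)) := by abel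
      have h1 : small nn 3 (x - bz) := by
        rw [e]
        exact small_add' (small_one_of_mem_vn hxvn)
          (small_add' (mem_Dball_small hzd) (small_neg' (small_one_of_mem_vn hbzvn)))
      exact small_mem_Dball h1
  intro x hx
  have hxvn : ∃ v₁ ∈ S, x ∈ vnFinset v₁ := by
    have := (Finset.mem_filter.mp hx).1
    exact Finset.mem_biUnion.mp this
  obtain ⟨v₁, hv₁, hxvn⟩ := hxvn
  obtain ⟨k, hk⟩ := hreach v₀ hv₀ v₁ hv₁
  exact aux2 k v₁ hv₁ hk x hx hxvn

end det


open scoped Classical in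
theorem pr_bad_le (n : ℕ) (q : ℝ) (hq0 : 0 ≤ q) (hq1 : q ≤ 1) (hn2 : 2 ≤ n)
    (m : ℕ) (hm : m = (⌈Real.log (n + 1)⌉₊ + 1) / 2) :
    pr (α := ZMod (n + 1) × ZMod (n + 1)) q
      (fun g => ∃ S : Finset (ZMod (n + 1) × ZMod (n + 1)),
        S.card = ⌈Real.log (n + 1)⌉₊ ∧
        (∀ v ∈ S, torusBMajStep (n + 1) g v = true) ∧
        ((mooreGraph (n + 1)).induce (S : Set (ZMod (n + 1) × ZMod (n + 1)))).Connected)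
      ≤ (((n + 1) ^ 2 * 49 ^ (2 * (m - 1)) : ℕ) : ℝ) * q ^ m := by
  classical
  set nn := n + 1 with hnn
  have hnn3 : 3 ≤ nn := by omega
  set kn := ⌈Real.log (n + 1)⌉₊ with hkn
  have hk1 : 1 ≤ kn := by
    rw [hkn]
    rw [Nat.one_le_ceil_iff]
    apply Real.log_pos
    have : (2:ℝ) ≤ (n:ℝ) := by exact_mod_cast hn2
    linarith
  have hm1 : 1 ≤ m := by omega
  set D := Dball nn 3 with hD
  set 𝓑 : Finset (Finset (ZMod nn × ZMod nn)) :=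
    Finset.univ.filter (fun B => ∃ b₀ ∈ B, B.card = m ∧ Conn D B b₀) with h𝓑
  have hincl : ∀ g : ZMod nn × ZMod nn → Bool,
      (∃ S : Finset (ZMod nn × ZMod nn), S.card = kn ∧
        (∀ v ∈ S, torusBMajStep nn g v = true) ∧
        ((mooreGraph nn).induce (S : Set (ZMod nn × ZMod nn))).Connected) →
      ∃ B ∈ 𝓑, ∀ v ∈ B, g v = true := by
    rintro g ⟨S, hcard, hblue1, hconn⟩
    have hblue : ∀ v ∈ S, 2 ≤ vnCount nn g v := by
      intro v hv
      have := hblue1 v hv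
      simpa [torusBMajStep, decide_eq_true_eq] using this
    have hSne : S.Nonempty := Finset.card_pos.mp (by omega)
    obtain ⟨Braw, hBblue, hcard2, b₀, hb₀, hBconn⟩ := det_core hnn3 g S hSne hblue hconn
    have hmB : m ≤ Braw.card := by rw [hcard] at hcard2; omega
    obtain ⟨B', hB'sub, hb₀', hB'card, hB'conn⟩ :=
      exists_trim D m Braw b₀ hb₀ hBconn hmB hm1
    exact ⟨B', Finset.mem_filter.mpr ⟨Finset.mem_univ _, b₀, hb₀', hB'card, hB'conn⟩,
      fun v hv => hBblue v (hB'sub hv)⟩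
  have hcardB : 𝓑.card ≤ nn ^ 2 * 49 ^ (2 * (m - 1)) := by
    have hsub : 𝓑 ⊆ Finset.univ.biUnion (fun b₀ => Finset.univ.filter
        (fun B : Finset (ZMod nn × ZMod nn) => b₀ ∈ B ∧ B.card = m ∧ Conn D B b₀)) := by
      intro B hB
      obtain ⟨-, b₀, hb₀, hc, hcon⟩ := Finset.mem_filter.mp hB
      exact Finset.mem_biUnion.mpr ⟨b₀, Finset.mem_univ _,
        Finset.mem_filter.mpr ⟨Finset.mem_univ _, hb₀, hc, hcon⟩⟩
    calc 𝓑.card ≤ _ := Finset.card_le_card hsub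
      _ ≤ ∑ b₀ : ZMod nn × ZMod nn, (Finset.univ.filter
          (fun B : Finset (ZMod nn × ZMod nn) => b₀ ∈ B ∧ B.card = m ∧ Conn D B b₀)).card :=
        Finset.card_biUnion_le
      _ ≤ ∑ _b₀ : ZMod nn × ZMod nn, 49 ^ (2 * (m - 1)) := by
        refine Finset.sum_le_sum fun b₀ _ => ?_
        refine le_trans (card_conn_sets_le D (Dball_symm 3) b₀ m) ?_
        refine Nat.pow_le_pow_left ?_ _
        have hDc : (Dball nn 3).card ≤ 49 := by
          have := Dball_card (nn := nn) 3
          omega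
        rw [hD]
        exact hDc
      _ = nn ^ 2 * 49 ^ (2 * (m - 1)) := by
        rw [Finset.sum_const, smul_eq_mul, Finset.card_univ, Fintype.card_prod, ZMod.card]
        ring
  calc pr q _ ≤ pr (α := ZMod nn × ZMod nn) q (fun g => ∃ B ∈ 𝓑, ∀ v ∈ B, g v = true) :=
        pr_mono hq0 hq1 hincl
    _ ≤ ∑ B ∈ 𝓑, pr (α := ZMod nn × ZMod nn) q (fun g => ∀ v ∈ B, g v = true) :=
        pr_union_le hq0 hq1 𝓑 _
    _ ≤ ∑ _B ∈ 𝓑, q ^ m := by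
        refine Finset.sum_le_sum fun B hB => ?_
        obtain ⟨-, b₀, hb₀, hc, hcon⟩ := Finset.mem_filter.mp hB
        exact hc ▸ pr_allblue_le hq0 hq1 B
    _ = (𝓑.card : ℝ) * q ^ m := by rw [Finset.sum_const, nsmul_eq_mul]
    _ ≤ (((n + 1) ^ 2 * 49 ^ (2 * (m - 1)) : ℕ) : ℝ) * q ^ m := by
        refine mul_le_mul_of_nonneg_right ?_ (pow_nonneg hq0 m)
        exact_mod_cast hcardB


/-- Biased majority model on the torus with von Neumann neighborhood: if
`p_b = o(1/√(log n))`, then w.h.p. generation `g_1` contains no Moore-connected blue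
component of size `⌈log n⌉`. -/
theorem stmt17 (p : ℕ → ℝ) (hp0 : ∀ n, 0 ≤ p n) (hp1 : ∀ n, p n ≤ 1)
    (hsmall : Tendsto (fun n : ℕ => p n * Real.sqrt (Real.log (n + 1))) atTop (nhds 0)) :
    Tendsto (fun n : ℕ =>
        pr (α := ZMod (n + 1) × ZMod (n + 1)) (p n)
          (fun g => ¬ ∃ S : Finset (ZMod (n + 1) × ZMod (n + 1)),
            S.card = ⌈Real.log (n + 1)⌉₊ ∧
            (∀ v ∈ S, torusBMajStep (n + 1) g v = true) ∧
            ((mooreGraph (n + 1)).induce (S : Set (ZMod (n + 1) × ZMod (n + 1)))).Connected))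
      atTop (nhds 1) := by
  classical
  have hcompl : ∀ n : ℕ, pr (α := ZMod (n + 1) × ZMod (n + 1)) (p n)
      (fun g => ¬ ∃ S : Finset (ZMod (n + 1) × ZMod (n + 1)),
        S.card = ⌈Real.log (n + 1)⌉₊ ∧
        (∀ v ∈ S, torusBMajStep (n + 1) g v = true) ∧
        ((mooreGraph (n + 1)).induce (S : Set (ZMod (n + 1) × ZMod (n + 1)))).Connected)
      = 1 - pr (α := ZMod (n + 1) × ZMod (n + 1)) (p n)
      (fun g => ∃ S : Finset (ZMod (n + 1) × ZMod (n + 1)),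
        S.card = ⌈Real.log (n + 1)⌉₊ ∧
        (∀ v ∈ S, torusBMajStep (n + 1) g v = true) ∧
        ((mooreGraph (n + 1)).induce (S : Set (ZMod (n + 1) × ZMod (n + 1)))).Connected) :=
    fun n => pr_compl (hp0 n) (hp1 n) _
  simp only [hcompl]
  suffices hbad : Tendsto (fun n : ℕ => pr (α := ZMod (n + 1) × ZMod (n + 1)) (p n)
      (fun g => ∃ S : Finset (ZMod (n + 1) × ZMod (n + 1)),
        S.card = ⌈Real.log (n + 1)⌉₊ ∧
        (∀ v ∈ S, torusBMajStep (n + 1) g v = true) ∧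
        ((mooreGraph (n + 1)).induce (S : Set (ZMod (n + 1) × ZMod (n + 1)))).Connected))
      atTop (nhds 0) by
    have h := (tendsto_const_nhds (x := (1:ℝ)) (f := atTop)).sub hbad
    simpa using h
  -- p n tends to 0
  have hp_to0 : Tendsto p atTop (nhds 0) := by
    refine squeeze_zero' (Filter.Eventually.of_forall hp0) ?_ hsmall
    filter_upwards [Filter.eventually_ge_atTop 2] with n hn2
    have hpos : (0:ℝ) < (n:ℝ) + 1 := by positivity
    have hlog : 1 ≤ Real.log ((n:ℝ) + 1) := by
      rw [Real.le_log_iff_exp_le hpos]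
      have h1 : Real.exp 1 < 2.7182818286 := Real.exp_one_lt_d9
      have h2 : (2:ℝ) ≤ (n:ℝ) := by exact_mod_cast hn2
      linarith
    have hs : 1 ≤ Real.sqrt (Real.log ((n:ℝ) + 1)) :=
      Real.one_le_sqrt.mpr hlog
    exact le_mul_of_one_le_right (hp0 n) hs
  have hev : ∀ᶠ n in atTop, p n < Real.exp (-10) / 2401 :=
    hp_to0.eventually_lt_const (by positivity)
  refine squeeze_zero' (g := fun n : ℕ => ((n:ℝ) + 1)⁻¹)
    (Filter.Eventually.of_forall fun n => pr_nonneg (hp0 n) (hp1 n) _) ?_ ?_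
  · filter_upwards [hev, Filter.eventually_ge_atTop 2] with n hpn hn2
    set m : ℕ := (⌈Real.log (n + 1)⌉₊ + 1) / 2 with hm
    have hk1 : 1 ≤ ⌈Real.log (n + 1)⌉₊ := by
      rw [Nat.one_le_ceil_iff]
      apply Real.log_pos
      have : (2:ℝ) ≤ (n:ℝ) := by exact_mod_cast hn2
      linarith
    have hm1 : 1 ≤ m := by omega
    have hb := pr_bad_le n (p n) (hp0 n) (hp1 n) hn2 m hm
    have hpos : (0:ℝ) < (n:ℝ) + 1 := by positivity
    -- numeric estimates
    have h2401 : 2401 * p n ≤ Real.exp (-10) := by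
      rw [lt_div_iff₀ (by norm_num)] at hpn
      linarith
    have hcast : (((n + 1) ^ 2 * 49 ^ (2 * (m - 1)) : ℕ) : ℝ)
        = ((n:ℝ) + 1) ^ 2 * (49:ℝ) ^ (2 * (m - 1)) := by push_cast; ring
    have h49 : ((n:ℝ) + 1) ^ 2 * (49:ℝ) ^ (2 * (m - 1)) * p n ^ m
        ≤ ((n:ℝ) + 1) ^ 2 * (49:ℝ) ^ (2 * m) * p n ^ m := by
      have : (49:ℝ) ^ (2 * (m - 1)) ≤ (49:ℝ) ^ (2 * m) :=
        pow_le_pow_right₀ (by norm_num) (by omega)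
      have hnn : (0:ℝ) ≤ ((n:ℝ) + 1) ^ 2 := by positivity
      have hpm : (0:ℝ) ≤ p n ^ m := pow_nonneg (hp0 n) m
      exact mul_le_mul_of_nonneg_right (mul_le_mul_of_nonneg_left this hnn) hpm
    have hsplit : ((n:ℝ) + 1) ^ 2 * (49:ℝ) ^ (2 * m) * p n ^ m
        = ((n:ℝ) + 1) ^ 2 * (2401 * p n) ^ m := by
      rw [pow_mul, mul_pow]
      norm_num
      ring
    have hexp : (2401 * p n) ^ m ≤ Real.exp (-10) ^ m :=
      pow_le_pow_left₀ (mul_nonneg (by norm_num) (hp0 n)) h2401 m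
    have hexp2 : Real.exp (-10:ℝ) ^ m = Real.exp ((-10) * m) := by
      rw [← Real.exp_nat_mul]
      ring_nf
    have hmge : Real.log ((n:ℝ) + 1) / 2 ≤ (m:ℝ) := by
      have hk2 : ⌈Real.log (n + 1)⌉₊ ≤ 2 * m := by omega
      have hle : Real.log ((n:ℝ) + 1) ≤ (⌈Real.log (n + 1)⌉₊ : ℝ) := Nat.le_ceil _
      have : ((⌈Real.log (n + 1)⌉₊ : ℕ) : ℝ) ≤ 2 * (m:ℝ) := by exact_mod_cast hk2
      linarith
    have hexp3 : Real.exp ((-10:ℝ) * m) ≤ Real.exp ((-5) * Real.log ((n:ℝ) + 1)) := by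
      apply Real.exp_le_exp.mpr
      nlinarith [hmge]
    have hrw : Real.exp ((-5:ℝ) * Real.log ((n:ℝ) + 1)) = ((n:ℝ) + 1) ^ (-5:ℝ) := by
      rw [Real.rpow_def_of_pos hpos, mul_comm]
    have hfin : ((n:ℝ) + 1) ^ 2 * ((n:ℝ) + 1) ^ (-5:ℝ) ≤ ((n:ℝ) + 1)⁻¹ := by
      have h1 : ((n:ℝ) + 1) ^ (2:ℕ) = ((n:ℝ) + 1) ^ ((2:ℕ):ℝ) := (Real.rpow_natCast _ 2).symm
      have h2 : ((n:ℝ) + 1) ^ ((2:ℕ):ℝ) * ((n:ℝ) + 1) ^ (-5:ℝ) = ((n:ℝ) + 1) ^ (-3:ℝ) := by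
        rw [← Real.rpow_add hpos]
        norm_num
      have h3 : ((n:ℝ) + 1) ^ (-3:ℝ) ≤ ((n:ℝ) + 1) ^ (-1:ℝ) := by
        apply Real.rpow_le_rpow_of_exponent_le (by linarith) (by norm_num)
      rw [h1, h2]
      rw [Real.rpow_neg_one] at h3
      exact h3
    have hexp0 : (0:ℝ) ≤ ((n:ℝ) + 1) ^ 2 := by positivity
    calc pr (α := ZMod (n + 1) × ZMod (n + 1)) (p n) _
        ≤ (((n + 1) ^ 2 * 49 ^ (2 * (m - 1)) : ℕ) : ℝ) * p n ^ m := hb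
      _ = ((n:ℝ) + 1) ^ 2 * (49:ℝ) ^ (2 * (m - 1)) * p n ^ m := by rw [hcast]
      _ ≤ ((n:ℝ) + 1) ^ 2 * (49:ℝ) ^ (2 * m) * p n ^ m := h49
      _ = ((n:ℝ) + 1) ^ 2 * (2401 * p n) ^ m := hsplit
      _ ≤ ((n:ℝ) + 1) ^ 2 * Real.exp (-10) ^ m :=
          mul_le_mul_of_nonneg_left hexp hexp0
      _ = ((n:ℝ) + 1) ^ 2 * Real.exp ((-10) * m) := by rw [hexp2]
      _ ≤ ((n:ℝ) + 1) ^ 2 * Real.exp ((-5) * Real.log ((n:ℝ) + 1)) :=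
          mul_le_mul_of_nonneg_left hexp3 hexp0
      _ = ((n:ℝ) + 1) ^ 2 * ((n:ℝ) + 1) ^ (-5:ℝ) := by rw [hrw]
      _ ≤ ((n:ℝ) + 1)⁻¹ := hfin
  · have := tendsto_one_div_add_atTop_nhds_zero_nat (𝕜 := ℝ)
    simpa [one_div] using this
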